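/- Let b ∈ ℝ with 0 ≤ b < 3/16 and let F = F_{−1,b}. Then p = (−b, 2b−1) is a fixed point of F, and the sets P = {(−5b, −4b+1), (9b−2, −1), (−9b+2, 10b−3), (−19b+4, 2b−1), (−21b+4, −16b+3)} and Q = {((b+2)/7, (6b−9)/7), ((4−5b)/7, 2b−1), ((4−19b)/7, (16b−3)/7), (−5b, (4b+1)/7), ((31b−8)/7, (−32b−1)/7)} are periodic orbits of F of minimal period 5, with F mapping each listed point to the next one and the last listed point to the first in each set. -/
import Mathlib


/-- The piecewise linear map `F_{a,b}(x,y) = (|x| - y + a, x - |y| + b)`. -/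
noncomputable def F (a b : ℝ) : ℝ × ℝ → ℝ × ℝ :=
  fun p => (|p.1| - p.2 + a, p.1 - |p.2| + b)

/-- `S` is a periodic orbit of `f` of minimal period `n`: it is the (finite) orbit
`{p, f p, …, f^[n-1] p}` of some periodic point `p` of minimal period `n`. -/
def IsPeriodicOrbit (f : ℝ × ℝ → ℝ × ℝ) (n : ℕ) (S : Set (ℝ × ℝ)) : Prop :=
  ∃ p : ℝ × ℝ, Function.minimalPeriod f p = n ∧ 0 < n ∧
    S = (fun k : ℕ => f^[k] p) '' Set.Iio n

lemma orbit5 (f : ℝ × ℝ → ℝ × ℝ) (p0 p1 p2 p3 p4 : ℝ × ℝ)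
    (h0 : f p0 = p1) (h1 : f p1 = p2) (h2 : f p2 = p3) (h3 : f p3 = p4) (h4 : f p4 = p0)
    (hne : p0 ≠ p1) :
    IsPeriodicOrbit f 5 {p0, p1, p2, p3, p4} := by
  have i0 : f^[0] p0 = p0 := rfl
  have i1 : f^[1] p0 = p1 := by simp [h0]
  have i2 : f^[2] p0 = p2 := by
    rw [Function.iterate_succ_apply', i1, h1]
  have i3 : f^[3] p0 = p3 := by
    rw [Function.iterate_succ_apply', i2, h2]
  have i4 : f^[4] p0 = p4 := by
    rw [Function.iterate_succ_apply', i3, h3]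
  have i5 : f^[5] p0 = p0 := by
    rw [Function.iterate_succ_apply', i4, h4]
  have hper : Function.IsPeriodicPt f 5 p0 := i5
  have hmp : Function.minimalPeriod f p0 = 5 := by
    have hdvd : Function.minimalPeriod f p0 ∣ 5 := hper.minimalPeriod_dvd
    rcases (by norm_num : Nat.Prime 5).eq_one_or_self_of_dvd _ hdvd with h | h
    · exfalso
      have hfix : Function.IsFixedPt f p0 :=
        Function.minimalPeriod_eq_one_iff_isFixedPt.mp h
      exact hne (hfix.symm.trans h0)
    · exact h
  refine ⟨p0, hmp, by norm_num, ?_⟩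
  ext x
  simp only [Set.mem_insert_iff, Set.mem_singleton_iff, Set.mem_image, Set.mem_Iio]
  constructor
  · rintro (rfl | rfl | rfl | rfl | rfl)
    · exact ⟨0, by norm_num, i0⟩
    · exact ⟨1, by norm_num, i1⟩
    · exact ⟨2, by norm_num, i2⟩
    · exact ⟨3, by norm_num, i3⟩
    · exact ⟨4, by norm_num, i4⟩
  · rintro ⟨k, hk, rfl⟩
    interval_cases k
    · exact Or.inl i0
    · exact Or.inr (Or.inl i1)
    · exact Or.inr (Or.inr (Or.inl i2))
    · exact Or.inr (Or.inr (Or.inr (Or.inl i3)))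
    · exact Or.inr (Or.inr (Or.inr (Or.inr i4)))

theorem case_b_in_zero_three_sixteenth (b : ℝ) (hb1 : 0 ≤ b) (hb2 : b < 3/16) :
    F (-1) b (-b, 2*b-1) = (-b, 2*b-1) ∧
    (IsPeriodicOrbit (F (-1) b) 5
        {(-5*b, -4*b+1), (9*b-2, -1), (-9*b+2, 10*b-3), (-19*b+4, 2*b-1),
         (-21*b+4, -16*b+3)} ∧
      F (-1) b (-5*b, -4*b+1) = (9*b-2, -1) ∧
      F (-1) b (9*b-2, -1) = (-9*b+2, 10*b-3) ∧
      F (-1) b (-9*b+2, 10*b-3) = (-19*b+4, 2*b-1) ∧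
      F (-1) b (-19*b+4, 2*b-1) = (-21*b+4, -16*b+3) ∧
      F (-1) b (-21*b+4, -16*b+3) = (-5*b, -4*b+1)) ∧
    (IsPeriodicOrbit (F (-1) b) 5
        {((b+2)/7, (6*b-9)/7), ((4-5*b)/7, 2*b-1), ((4-19*b)/7, (16*b-3)/7),
         (-5*b, (4*b+1)/7), ((31*b-8)/7, (-32*b-1)/7)} ∧
      F (-1) b ((b+2)/7, (6*b-9)/7) = ((4-5*b)/7, 2*b-1) ∧
      F (-1) b ((4-5*b)/7, 2*b-1) = ((4-19*b)/7, (16*b-3)/7) ∧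
      F (-1) b ((4-19*b)/7, (16*b-3)/7) = (-5*b, (4*b+1)/7) ∧
      F (-1) b (-5*b, (4*b+1)/7) = ((31*b-8)/7, (-32*b-1)/7) ∧
      F (-1) b ((31*b-8)/7, (-32*b-1)/7) = ((b+2)/7, (6*b-9)/7)) := by
  have fix : F (-1) b (-b, 2*b-1) = (-b, 2*b-1) := by
    simp only [F]
    rw [abs_of_nonpos (by linarith : -b ≤ 0), abs_of_nonpos (by linarith : 2*b-1 ≤ 0)]
    simp [Prod.ext_iff]; constructor <;> ring
  have e0 : F (-1) b (-5*b, -4*b+1) = (9*b-2, -1) := by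
    simp only [F]
    rw [abs_of_nonpos (by linarith : -5*b ≤ 0), abs_of_nonneg (by linarith : (0:ℝ) ≤ -4*b+1)]
    simp [Prod.ext_iff]; constructor <;> ring
  have e1 : F (-1) b (9*b-2, -1) = (-9*b+2, 10*b-3) := by
    simp only [F]
    rw [abs_of_nonpos (by linarith : 9*b-2 ≤ 0), abs_of_nonpos (by norm_num : (-1:ℝ) ≤ 0)]
    simp [Prod.ext_iff]; constructor <;> ring
  have e2 : F (-1) b (-9*b+2, 10*b-3) = (-19*b+4, 2*b-1) := by
    simp only [F]
    rw [abs_of_nonneg (by linarith : (0:ℝ) ≤ -9*b+2), abs_of_nonpos (by linarith : 10*b-3 ≤ 0)]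
    simp [Prod.ext_iff]; constructor <;> ring
  have e3 : F (-1) b (-19*b+4, 2*b-1) = (-21*b+4, -16*b+3) := by
    simp only [F]
    rw [abs_of_nonneg (by linarith : (0:ℝ) ≤ -19*b+4), abs_of_nonpos (by linarith : 2*b-1 ≤ 0)]
    simp [Prod.ext_iff]; constructor <;> ring
  have e4 : F (-1) b (-21*b+4, -16*b+3) = (-5*b, -4*b+1) := by
    simp only [F]
    rw [abs_of_nonneg (by linarith : (0:ℝ) ≤ -21*b+4), abs_of_nonneg (by linarith : (0:ℝ) ≤ -16*b+3)]
    simp [Prod.ext_iff]; constructor <;> ring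
  have f0 : F (-1) b ((b+2)/7, (6*b-9)/7) = ((4-5*b)/7, 2*b-1) := by
    simp only [F]
    rw [abs_of_nonneg (by linarith : (0:ℝ) ≤ (b+2)/7), abs_of_nonpos (by linarith : (6*b-9)/7 ≤ 0)]
    simp [Prod.ext_iff]; constructor <;> ring
  have f1 : F (-1) b ((4-5*b)/7, 2*b-1) = ((4-19*b)/7, (16*b-3)/7) := by
    simp only [F]
    rw [abs_of_nonneg (by linarith : (0:ℝ) ≤ (4-5*b)/7), abs_of_nonpos (by linarith : 2*b-1 ≤ 0)]
    simp [Prod.ext_iff]; constructor <;> ring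
  have f2 : F (-1) b ((4-19*b)/7, (16*b-3)/7) = (-5*b, (4*b+1)/7) := by
    simp only [F]
    rw [abs_of_nonneg (by linarith : (0:ℝ) ≤ (4-19*b)/7), abs_of_nonpos (by linarith : (16*b-3)/7 ≤ 0)]
    simp [Prod.ext_iff]; constructor <;> ring
  have f3 : F (-1) b (-5*b, (4*b+1)/7) = ((31*b-8)/7, (-32*b-1)/7) := by
    simp only [F]
    rw [abs_of_nonpos (by linarith : -5*b ≤ 0), abs_of_nonneg (by linarith : (0:ℝ) ≤ (4*b+1)/7)]
    simp [Prod.ext_iff]; constructor <;> ring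
  have f4 : F (-1) b ((31*b-8)/7, (-32*b-1)/7) = ((b+2)/7, (6*b-9)/7) := by
    simp only [F]
    rw [abs_of_nonpos (by linarith : (31*b-8)/7 ≤ 0), abs_of_nonpos (by linarith : (-32*b-1)/7 ≤ 0)]
    simp [Prod.ext_iff]; constructor <;> ring
  refine ⟨fix, ⟨?_, e0, e1, e2, e3, e4⟩, ⟨?_, f0, f1, f2, f3, f4⟩⟩
  · exact orbit5 _ _ _ _ _ _ e0 e1 e2 e3 e4 (by
      intro h
      have := congrArg Prod.snd h
      simp at this
      linarith)
  · exact orbit5 _ _ _ _ _ _ f0 f1 f2 f3 f4 (by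
      intro h
      have := congrArg Prod.snd h
      simp at this
      linarith)
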